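/- arXiv:1212.4695 — 6 statements merged into one kernel-verified Lean document; each statement's English description precedes it below -/
import Mathlib

section
/- Let K ⊂ ℝ^D be compact, let C U := ∫_K U and B U := ∮_{∂K} U be the cell integral and boundary integral, assumed to satisfy C(1) > 0 and B(1)/C(1) = 1 (i.e. B̂(1) = 1 where B̂(U) := BU/CU). Suppose U⋆ is continuous on K, nonnegative on K, C U⋆ > 0, and U⋆ maximizes B̂ over all continuous nonnegative functions with positive cell integral in a given admissible class closed under subtraction of constants. If B̂(U⋆) > 1 then min_{x∈K} U⋆(x) = 0, i.e. a non-constant optimizer has a zero in K. -/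
/-- A non-constant optimizer of the boundary crowding has a zero in the (compact)
mesh cell `K`.  `C` is the cell integral and `B` the boundary integral, linear
functionals with `C 1 > 0` and `B̂(1) = 1`; `S` is an admissible class of
functions closed under subtraction of constants; `Ustar` is a continuous
nonnegative maximizer of the boundary crowding `B̂(U) = B U / C U` over `S`.
If `B̂(Ustar) > 1` then `Ustar` vanishes somewhere in `K`
(equivalently, its minimum over `K` is `0`). -/
theorem optimizer_has_zero
    {D : ℕ} (K : Set (EuclideanSpace ℝ (Fin D))) (hK : IsCompact K)
    (C B : (EuclideanSpace ℝ (Fin D) → ℝ) →ₗ[ℝ] ℝ)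
    (hC1 : 0 < C (fun _ => 1))
    (hB1 : B (fun _ => 1) / C (fun _ => 1) = 1)
    (S : Set (EuclideanSpace ℝ (Fin D) → ℝ))
    (hSsub : ∀ U ∈ S, ∀ c : ℝ, (fun x => U x - c) ∈ S)
    (Ustar : EuclideanSpace ℝ (Fin D) → ℝ) (hUstarS : Ustar ∈ S)
    (hUcont : ContinuousOn Ustar K)
    (hUpos : ∀ x ∈ K, 0 ≤ Ustar x)
    (hCU : 0 < C Ustar)
    (hmax : ∀ U ∈ S, ContinuousOn U K → (∀ x ∈ K, 0 ≤ U x) → 0 < C U →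
      B U / C U ≤ B Ustar / C Ustar)
    (hgt : 1 < B Ustar / C Ustar) :
    ∃ x ∈ K, Ustar x = 0 := by
  by_contra h
  push_neg at h
  set c1 : ℝ := C (fun _ => 1) with hc1
  set b1 : ℝ := B (fun _ => 1) with hb1def
  have hb1 : b1 = c1 := by
    field_simp at hB1; linarith [hB1]
  -- linearity under subtraction of a constant
  have hlin : ∀ c : ℝ, ((fun x => Ustar x - c) = Ustar - c • (fun _ => (1:ℝ))) := by
    intro c; funext x; simp [Pi.sub_apply, Pi.smul_apply, smul_eq_mul]
  have hClin : ∀ c : ℝ, C (fun x => Ustar x - c) = C Ustar - c * c1 := by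
    intro c; rw [hlin c, map_sub, map_smul, smul_eq_mul]
  have hBlin : ∀ c : ℝ, B (fun x => Ustar x - c) = B Ustar - c * c1 := by
    intro c; rw [hlin c, map_sub, map_smul, smul_eq_mul, ← hb1def, hb1]
  have hBU : C Ustar < B Ustar := by
    have := (one_lt_div hCU).mp hgt; linarith
  -- key step: any c > 0 with Ustar ≥ c on K and C Ustar - c*c1 > 0 gives a contradiction
  have key : ∀ c : ℝ, 0 < c → (∀ x ∈ K, 0 ≤ Ustar x - c) →
      0 < C Ustar - c * c1 → False := by
    intro c hc hnn hCpos
    have hmem := hSsub Ustar hUstarS c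
    have hcont : ContinuousOn (fun x => Ustar x - c) K := hUcont.sub continuousOn_const
    have hle := hmax _ hmem hcont hnn (by rw [hClin c]; exact hCpos)
    rw [hBlin c, hClin c] at hle
    rw [div_le_div_iff₀ hCpos hCU] at hle
    nlinarith [mul_pos hc hC1, hCU]
  rcases K.eq_empty_or_nonempty with hKe | hKne
  · -- K empty: subtract c := C Ustar / (2 c1); nonnegativity on K is vacuous
    apply key (C Ustar / (2 * c1)) (div_pos hCU (by linarith))
    · intro x hx; rw [hKe] at hx; exact absurd hx (Set.notMem_empty x)
    · have : C Ustar / (2 * c1) * c1 = C Ustar / 2 := by field_simp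
      rw [this]; linarith
  · -- K nonempty: subtract a bit less than the (positive) minimum
    obtain ⟨x0, hx0K, hx0min⟩ := hK.exists_isMinOn hKne hUcont
    have hm : 0 < Ustar x0 := lt_of_le_of_ne (hUpos x0 hx0K) (Ne.symm (h x0 hx0K))
    set c : ℝ := min (Ustar x0) (C Ustar / (2 * c1)) with hcdef
    have hcpos : 0 < c := lt_min hm (div_pos hCU (by linarith))
    apply key c hcpos
    · intro x hx
      have h1 : Ustar x0 ≤ Ustar x := hx0min hx
      have h2 : c ≤ Ustar x0 := min_le_left _ _
      linarith
    · have hle : c ≤ C Ustar / (2 * c1) := min_le_right _ _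
      have h2 : C Ustar / (2 * c1) * c1 = C Ustar / 2 := by field_simp
      nlinarith [mul_le_mul_of_nonneg_right hle hC1.le]
end

section
/- Let n ≥ 0 and let x_1 < … < x_n be the interior Gauss–Lobatto points in (0,1). Define U⋆(x) = ∏_{i=1}^n (x − x_i)^2, a nonnegative polynomial of degree 2n. Then the boundary crowding B̂(U⋆) := (U⋆(0)+U⋆(1))/2 divided by ∫_0^1 U⋆ equals (n+1)(n+2)/2, and this is the maximum of B̂ over all nonzero nonnegative polynomials of degree at most 2n+1 on [0,1]. That is, for every polynomial U of degree at most 2n+1 with U ≥ 0 on [0,1] and ∫_0^1 U > 0, (U(0)+U(1))/2 ≤ ((n+1)(n+2)/2)·∫_0^1 U, and equality holds for U = U⋆. -/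
open intervalIntegral

/-- Let `x 0 < … < x (n-1)` be the interior Gauss–Lobatto points in `(0,1)`
(characterized by the Gauss–Lobatto quadrature identity with endpoint weight
`2/((n+1)(n+2))` exact on degree `≤ 2n+1`).  Then `U⋆ = ∏ (X − x i)²` satisfies
`B̂(U⋆) = (n+1)(n+2)/2`, and this is the maximum boundary crowding over all
nonnegative polynomials of degree at most `2n+1` with positive cell integral:
`(U(0)+U(1))/2 ≤ ((n+1)(n+2)/2)·∫₀¹ U`. -/
theorem gauss_lobatto_optimizer (n : ℕ)
    (x : Fin n → ℝ) (hx : ∀ i, x i ∈ Set.Ioo (0 : ℝ) 1)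
    (hmono : StrictMono x)
    (w : Fin n → ℝ) (hw : ∀ i, 0 < w i)
    (hquad : ∀ U : Polynomial ℝ, U.natDegree ≤ 2 * n + 1 →
      2 * ∫ t in (0:ℝ)..1, U.eval t =
        (2 / (((n : ℝ) + 1) * ((n : ℝ) + 2))) * (U.eval 0 + U.eval 1) +
          ∑ i, w i * U.eval (x i)) :
    (((∏ i, (Polynomial.X - Polynomial.C (x i)) ^ 2 : Polynomial ℝ).eval 0 +
        (∏ i, (Polynomial.X - Polynomial.C (x i)) ^ 2 : Polynomial ℝ).eval 1) / 2 =
      (((n : ℝ) + 1) * ((n : ℝ) + 2) / 2) *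
        ∫ t in (0:ℝ)..1,
          (∏ i, (Polynomial.X - Polynomial.C (x i)) ^ 2 : Polynomial ℝ).eval t) ∧
    ∀ U : Polynomial ℝ, U.natDegree ≤ 2 * n + 1 →
      (∀ t ∈ Set.Icc (0 : ℝ) 1, 0 ≤ U.eval t) →
      0 < ∫ t in (0:ℝ)..1, U.eval t →
      (U.eval 0 + U.eval 1) / 2 ≤
        (((n : ℝ) + 1) * ((n : ℝ) + 2) / 2) * ∫ t in (0:ℝ)..1, U.eval t := by

  have hc : (0:ℝ) < ((n : ℝ) + 1) * ((n : ℝ) + 2) := by positivity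
  constructor
  · set P : Polynomial ℝ := ∏ i, (Polynomial.X - Polynomial.C (x i)) ^ 2 with hP
    have hdeg : P.natDegree ≤ 2 * n + 1 := by
      refine le_trans (Polynomial.natDegree_prod_le _ _) ?_
      have : ∀ i ∈ Finset.univ, ((Polynomial.X - Polynomial.C (x i)) ^ 2).natDegree ≤ 2 := by
        intro i _
        simp [Polynomial.natDegree_pow, Polynomial.natDegree_X_sub_C]
      refine le_trans (Finset.sum_le_sum this) ?_
      simp [Finset.sum_const, mul_comm]
    have hzero : ∀ i, P.eval (x i) = 0 := by
      intro i
      rw [hP, Polynomial.eval_prod]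
      exact Finset.prod_eq_zero (Finset.mem_univ i) (by simp)
    have hq := hquad P hdeg
    simp only [hzero, mul_zero, Finset.sum_const_zero, add_zero] at hq
    have hcne : ((n : ℝ) + 1) * ((n : ℝ) + 2) ≠ 0 := ne_of_gt hc
    field_simp at hq ⊢
    linarith
  · intro U hU hpos _
    have hq := hquad U hU
    have hsum : 0 ≤ ∑ i, w i * U.eval (x i) := by
      refine Finset.sum_nonneg fun i _ => mul_nonneg (le_of_lt (hw i)) ?_
      exact hpos _ ⟨le_of_lt (hx i).1, le_of_lt (hx i).2⟩
    have hcne : ((n : ℝ) + 1) * ((n : ℝ) + 2) ≠ 0 := ne_of_gt hc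
    rw [div_mul_eq_mul_div, eq_comm, div_add' _ _ _ hcne, div_eq_iff hcne] at hq
    nlinarith [hq, hsum, hc]
end

section
/- Special case n = 1: For every quadratic polynomial U on [0,1] with U ≥ 0 on [0,1] and ∫_0^1 U > 0, we have (U(0)+U(1))/2 ≤ 3·∫_0^1 U, with equality if and only if U is a positive multiple of (x − 1/2)^2. -/
open intervalIntegral

/-- For every quadratic polynomial `U ≥ 0` on `[0,1]` with `∫₀¹ U > 0`, the
boundary average is at most `3` times the cell average:
`(U(0)+U(1))/2 ≤ 3·∫₀¹ U`, with equality iff `U` is a positive multiple of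
`(X − 1/2)²`. -/
theorem quadratic_crowding_unit_interval
    (U : Polynomial ℝ) (hdeg : U.natDegree ≤ 2)
    (hpos : ∀ t ∈ Set.Icc (0 : ℝ) 1, 0 ≤ U.eval t)
    (hC : 0 < ∫ t in (0:ℝ)..1, U.eval t) :
    (U.eval 0 + U.eval 1) / 2 ≤ 3 * ∫ t in (0:ℝ)..1, U.eval t ∧
    ((U.eval 0 + U.eval 1) / 2 = 3 * ∫ t in (0:ℝ)..1, U.eval t ↔
      ∃ c : ℝ, 0 < c ∧
        U = Polynomial.C c * (Polynomial.X - Polynomial.C (1/2)) ^ 2) := by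
  set a := U.coeff 2 with ha
  set b := U.coeff 1 with hb
  set c := U.coeff 0 with hc
  have hrepr : U = Polynomial.C a * Polynomial.X ^ 2 + Polynomial.C b * Polynomial.X
      + Polynomial.C c := by
    ext n
    match n with
    | 0 => simp [hc]
    | 1 => simp [hb]
    | 2 => simp [ha]
    | (m+3) =>
      rw [Polynomial.coeff_eq_zero_of_natDegree_lt (by omega)]
      simp [Polynomial.coeff_X, Polynomial.coeff_C]
  have heval : ∀ t : ℝ, U.eval t = a * t ^ 2 + b * t + c := by
    intro t; rw [hrepr]; simp
  have hI : (∫ t in (0:ℝ)..1, U.eval t) = a / 3 + b / 2 + c := by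
    have : (∫ t in (0:ℝ)..1, U.eval t)
        = ∫ t in (0:ℝ)..1, (a * t ^ 2 + b * t + c) := by
      congr 1; ext t; rw [heval]
    rw [this]
    have i1 : IntervalIntegrable (fun t : ℝ => a * t ^ 2) MeasureTheory.volume 0 1 :=
      (continuous_const.mul (continuous_pow 2)).intervalIntegrable _ _
    have i2 : IntervalIntegrable (fun t : ℝ => b * t) MeasureTheory.volume 0 1 :=
      (continuous_const.mul continuous_id).intervalIntegrable _ _
    have i3 : IntervalIntegrable (fun _ : ℝ => c) MeasureTheory.volume 0 1 :=
      intervalIntegrable_const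
    rw [intervalIntegral.integral_add (i1.add i2) i3, intervalIntegral.integral_add i1 i2,
      intervalIntegral.integral_const_mul, intervalIntegral.integral_const_mul,
      integral_pow, integral_id, intervalIntegral.integral_const]
    norm_num
    ring
  have hmid : 0 ≤ a / 4 + b / 2 + c := by
    have := hpos (1/2) (by norm_num)
    rw [heval] at this; linarith [this]
  have h0 : U.eval 0 = c := by rw [heval]; ring
  have h1 : U.eval 1 = a + b + c := by rw [heval]; ring
  constructor
  · rw [h0, h1, hI]; linarith
  constructor
  · intro heq
    rw [h0, h1, hI] at heq
    have key : a + 2 * b + 4 * c = 0 := by linarith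
    -- show a + b = 0
    have hd : a + b = 0 := by
      by_contra hd
      set ε := min (1/2 : ℝ) (|a + b| / (|a| + 1)) with hε
      have hε0 : 0 < ε := lt_min (by norm_num) (div_pos (abs_pos.2 hd) (by positivity))
      have hε2 : ε ≤ 1/2 := min_le_left _ _
      have haε : |a| * ε < |a + b| := by
        have h1 : ε ≤ |a + b| / (|a| + 1) := min_le_right _ _
        have h2 : |a| * ε ≤ |a| * (|a + b| / (|a| + 1)) :=
          mul_le_mul_of_nonneg_left h1 (abs_nonneg a)
        have h3 : |a| * (|a + b| / (|a| + 1)) < |a + b| := by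
          rw [mul_div_assoc']
          rw [div_lt_iff₀ (by positivity)]
          have : 0 < |a + b| := abs_pos.2 hd
          nlinarith [abs_nonneg a]
        linarith
      have habs : a ≤ |a| ∧ -|a| ≤ a := ⟨le_abs_self a, neg_abs_le a⟩
      rcases lt_or_gt_of_ne hd with hlt | hgt
      · -- a + b < 0, take t = 1/2 + ε
        have ht : (0:ℝ) ≤ 1/2 + ε ∧ (1/2 + ε : ℝ) ≤ 1 := ⟨by linarith, by linarith⟩
        have := hpos (1/2 + ε) ⟨ht.1, ht.2⟩
        rw [heval] at this
        have habd : |a + b| = -(a + b) := abs_of_neg hlt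
        rw [habd] at haε
        nlinarith [mul_pos hε0 hε0, habs.1, habs.2, mul_le_mul_of_nonneg_right habs.1 hε0.le]
      · -- a + b > 0, take t = 1/2 - ε
        have := hpos (1/2 - ε) ⟨by linarith, by linarith⟩
        rw [heval] at this
        have habd : |a + b| = a + b := abs_of_pos hgt
        rw [habd] at haε
        nlinarith [mul_pos hε0 hε0, habs.1, habs.2, mul_le_mul_of_nonneg_right habs.2 hε0.le]
    have hbb : b = -a := by linarith
    have hcc : c = a / 4 := by linarith
    have hapos : 0 < a := by
      rw [hI] at hC; rw [hbb, hcc] at hC; linarith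
    refine ⟨a, hapos, ?_⟩
    apply Polynomial.funext
    intro x
    rw [heval x, hbb, hcc]
    simp
    ring
  · rintro ⟨k, hk, rfl⟩
    have E0 := heval 0
    have E1 := heval 1
    have Eh := heval (1/2)
    simp at E0 E1 Eh
    rw [h0, h1, hI]
    nlinarith [E0, E1, Eh]
end

section
/- For every cubic polynomial U on [0,1] with U ≥ 0 on [0,1] and ∫_0^1 U > 0, we have (U(0)+U(1))/2 ≤ 3·∫_0^1 U. That is, the optimal boundary crowding cap for cubic polynomials on the unit interval equals that for quadratics, namely 3. -/
open intervalIntegral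

lemma cubic_eval (U : Polynomial ℝ) (hdeg : U.natDegree ≤ 3) (t : ℝ) :
    U.eval t = U.coeff 0 + U.coeff 1 * t + U.coeff 2 * t ^ 2 + U.coeff 3 * t ^ 3 := by
  rw [Polynomial.eval_eq_sum_range' (lt_of_le_of_lt hdeg (by norm_num : (3:ℕ) < 4))]
  simp [Finset.sum_range_succ]

lemma cubic_integral (U : Polynomial ℝ) (hdeg : U.natDegree ≤ 3) :
    ∫ t in (0:ℝ)..1, U.eval t
      = U.coeff 0 + U.coeff 1 / 2 + U.coeff 2 / 3 + U.coeff 3 / 4 := by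
  have h : ∀ t ∈ Set.uIcc (0:ℝ) 1,
      U.eval t = U.coeff 0 + U.coeff 1 * t + U.coeff 2 * t ^ 2 + U.coeff 3 * t ^ 3 :=
    fun t _ => cubic_eval U hdeg t
  rw [intervalIntegral.integral_congr h]
  have i1 : IntervalIntegrable (fun t : ℝ => U.coeff 1 * t) MeasureTheory.volume 0 1 :=
    (continuous_const.mul continuous_id).intervalIntegrable _ _
  have i2 : IntervalIntegrable (fun t : ℝ => U.coeff 2 * t ^ 2) MeasureTheory.volume 0 1 :=
    (continuous_const.mul (continuous_pow 2)).intervalIntegrable _ _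
  have i3 : IntervalIntegrable (fun t : ℝ => U.coeff 3 * t ^ 3) MeasureTheory.volume 0 1 :=
    (continuous_const.mul (continuous_pow 3)).intervalIntegrable _ _
  rw [intervalIntegral.integral_add (((_root_.intervalIntegrable_const).add i1).add i2) i3,
      intervalIntegral.integral_add ((_root_.intervalIntegrable_const).add i1) i2,
      intervalIntegral.integral_add _root_.intervalIntegrable_const i1,
      intervalIntegral.integral_const,
      intervalIntegral.integral_const_mul, intervalIntegral.integral_const_mul,
      intervalIntegral.integral_const_mul]
  simp only [integral_id, integral_pow]
  norm_num
  ring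

/-- For every cubic polynomial `U ≥ 0` on `[0,1]` with `∫₀¹ U > 0`, the boundary
average is at most `3` times the cell average: `(U(0)+U(1))/2 ≤ 3·∫₀¹ U`; i.e.
the optimal boundary crowding cap for cubics equals that for quadratics. -/
theorem cubic_crowding_unit_interval
    (U : Polynomial ℝ) (hdeg : U.natDegree ≤ 3)
    (hpos : ∀ t ∈ Set.Icc (0 : ℝ) 1, 0 ≤ U.eval t)
    (hC : 0 < ∫ t in (0:ℝ)..1, U.eval t) :
    (U.eval 0 + U.eval 1) / 2 ≤ 3 * ∫ t in (0:ℝ)..1, U.eval t := by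
  have hmid : 0 ≤ U.eval (1/2) := hpos _ (by norm_num)
  rw [cubic_integral U hdeg, cubic_eval U hdeg 0, cubic_eval U hdeg 1] at *
  rw [cubic_eval U hdeg (1/2)] at hmid
  nlinarith [hmid]
end

section
/- Special case D = 1: for every quadratic polynomial U on [−1,1] with U ≥ 0 on [−1,1] and ∫_{−1}^1 U > 0, (U(−1)+U(1))/2 ≤ 3·(1/2)∫_{−1}^1 U, i.e. the boundary average is at most 3 times the cell average, with equality iff U is a positive multiple of x^2. -/
open intervalIntegral

lemma quad_decomp (U : Polynomial ℝ) (hdeg : U.natDegree ≤ 2) :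
    U = Polynomial.C (U.coeff 2) * Polynomial.X ^ 2 + Polynomial.C (U.coeff 1) * Polynomial.X
        + Polynomial.C (U.coeff 0) := by
  ext n
  rcases n with _ | _ | _ | n
  · simp
  · simp
  · simp
  · have h : U.natDegree < n + 3 := by omega
    simp [Polynomial.coeff_eq_zero_of_natDegree_lt h, Polynomial.coeff_X_pow,
      Polynomial.coeff_C]

/-- Case `D = 1` of the quadratic optimal weight: for every quadratic polynomial
`U ≥ 0` on `[−1,1]` with `∫₋₁¹ U > 0`, the boundary average `(U(−1)+U(1))/2` is
at most `3` times the cell average `(1/2)∫₋₁¹ U`, with equality iff `U` is a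
positive multiple of `x²`. -/
theorem quadratic_crowding_symmetric_interval
    (U : Polynomial ℝ) (hdeg : U.natDegree ≤ 2)
    (hpos : ∀ t ∈ Set.Icc (-1 : ℝ) 1, 0 ≤ U.eval t)
    (hC : 0 < ∫ t in (-1:ℝ)..1, U.eval t) :
    (U.eval (-1) + U.eval 1) / 2 ≤ 3 * ((1/2) * ∫ t in (-1:ℝ)..1, U.eval t) ∧
    ((U.eval (-1) + U.eval 1) / 2 = 3 * ((1/2) * ∫ t in (-1:ℝ)..1, U.eval t) ↔
      ∃ c : ℝ, 0 < c ∧ U = Polynomial.C c * Polynomial.X ^ 2) := by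
  set a := U.coeff 2 with ha
  set b := U.coeff 1 with hb
  set c0 := U.coeff 0 with hc0
  have hU : ∀ t : ℝ, U.eval t = a * t ^ 2 + b * t + c0 := by
    intro t
    conv_lhs => rw [quad_decomp U hdeg]
    simp
    rfl
  have h1 : IntervalIntegrable (fun t : ℝ => a * t ^ 2) MeasureTheory.volume (-1) 1 :=
    (by continuity : Continuous fun t : ℝ => a * t ^ 2).intervalIntegrable _ _
  have h2 : IntervalIntegrable (fun t : ℝ => b * t) MeasureTheory.volume (-1) 1 :=
    (by continuity : Continuous fun t : ℝ => b * t).intervalIntegrable _ _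
  have h3 : IntervalIntegrable (fun _ : ℝ => c0) MeasureTheory.volume (-1) 1 :=
    intervalIntegrable_const
  have hint : (∫ t in (-1:ℝ)..1, U.eval t) = 2/3 * a + 2 * c0 := by
    simp_rw [hU]
    rw [intervalIntegral.integral_add (h1.add h2) h3, intervalIntegral.integral_add h1 h2,
      intervalIntegral.integral_const_mul, intervalIntegral.integral_const_mul,
      integral_pow, integral_id, intervalIntegral.integral_const]
    norm_num
    ring
  have hc0nn : 0 ≤ c0 := by
    have := hpos 0 (by norm_num)
    rw [hU] at this; linarith [this]
  rw [hint, hU, hU]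
  constructor
  · nlinarith
  constructor
  · intro heq
    have hc00 : c0 = 0 := by nlinarith
    have habs : a ≤ |a| := le_abs_self a
    have habs' : -|a| ≤ a := neg_abs_le a
    have hb0 : b = 0 := by
      rcases lt_trichotomy b 0 with h | h | h
      · exfalso
        set s : ℝ := -b / (|a| - b) with hs
        have hd : 0 < |a| - b := by have := abs_nonneg a; linarith
        have hs1 : 0 < s := div_pos (by linarith) hd
        have hs2 : s ≤ 1 := by
          rw [hs, div_le_one hd]; linarith [abs_nonneg a]
        have hval := hpos s ⟨by linarith, hs2⟩
        rw [hU, hc00] at hval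
        have hsd : s * (|a| - b) = -b := by
          rw [hs]; field_simp
        have key : s * (s * (|a| - b)) = s * (-b) := by rw [hsd]
        have hss : 0 < s * s := mul_pos hs1 hs1
        nlinarith [key, hss, mul_le_mul_of_nonneg_left habs (mul_nonneg hs1.le hs1.le),
          mul_pos hss (neg_pos.mpr h)]
      · exact h
      · exfalso
        set s : ℝ := -b / (|a| + b) with hs
        have hd : 0 < |a| + b := by positivity
        have hs1 : s < 0 := by
          rw [hs]; apply div_neg_of_neg_of_pos <;> linarith
        have hs2 : -1 ≤ s := by
          rw [hs, le_div_iff₀ hd]; linarith [abs_nonneg a]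
        have hval := hpos s ⟨hs2, by linarith⟩
        rw [hU, hc00] at hval
        have hsd : s * (|a| + b) = -b := by
          rw [hs]; field_simp
        have key : s * (s * (|a| + b)) = s * (-b) := by rw [hsd]
        have hss : 0 < s * s := mul_pos_of_neg_of_neg hs1 hs1
        nlinarith [key, hss, mul_le_mul_of_nonneg_left habs hss.le, mul_pos hss h]
    have hapos : 0 < a := by
      rw [hint, hc00] at hC; linarith
    refine ⟨a, hapos, ?_⟩
    rw [quad_decomp U hdeg, ← ha, ← hb, ← hc0, hb0, hc00]
    simp
  · rintro ⟨c, hc, rfl⟩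
    have ha' : a = c := by simp [ha]
    have hb' : b = 0 := by simp [hb]
    have hc0' : c0 = 0 := by simp [hc0]
    rw [ha', hb', hc0']
    ring
end

section
/- Let K be an even mesh cell with center at the origin (K = −K), invariant under the map x ↦ −x, and suppose that map is an isometry of K preserving both the cell measure and boundary measure. Then the supremum of the boundary crowding B̄(U)/C̄(U) over nonzero nonnegative polynomials of degree at most 2n+1 equals the supremum over nonzero nonnegative polynomials of degree at most 2n. That is, M̄⋆(P^{2n+1}) = M̄⋆(P^{2n}) for even cells. -/
open MeasureTheory MvPolynomial

set_option maxRecDepth 10000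
set_option maxHeartbeats 2000000

section Aux
variable {D : ℕ}

/-- Composition of a polynomial with `x ↦ -x`. -/
noncomputable def EvenAux.negP (P : MvPolynomial (Fin D) ℝ) : MvPolynomial (Fin D) ℝ :=
  bind₁ (fun i => -X i) P

lemma EvenAux.negP_monomial (d : Fin D →₀ ℕ) (r : ℝ) :
    EvenAux.negP (monomial d r) =
      ((-1 : MvPolynomial (Fin D) ℝ) ^ (d.sum fun _ e => e)) * monomial d r := by
  rw [EvenAux.negP, bind₁_monomial, monomial_eq, Finsupp.prod, Finsupp.sum,
    ← Finset.prod_pow_eq_pow_sum]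
  rw [Finset.prod_congr rfl (fun i _ => neg_pow (X i : MvPolynomial (Fin D) ℝ) (d i)),
    Finset.prod_mul_distrib]
  ring

lemma EvenAux.eval_negP (P : MvPolynomial (Fin D) ℝ) (g : Fin D → ℝ) :
    eval g (EvenAux.negP P) = eval (fun i => -g i) P := by
  rw [EvenAux.negP]
  rw [show (eval g : MvPolynomial (Fin D) ℝ →+* ℝ) = eval₂Hom (RingHom.id ℝ) g from rfl,
    eval₂Hom_bind₁]
  simp

end Aux

section Aux2
variable {D : ℕ}

lemma EvenAux.totalDegree_add_negP {n : ℕ} (P : MvPolynomial (Fin D) ℝ)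
    (hP : P.totalDegree ≤ 2 * n + 1) :
    (P + EvenAux.negP P).totalDegree ≤ 2 * n := by
  have hneg : EvenAux.negP P = ∑ d ∈ P.support,
      ((-1 : MvPolynomial (Fin D) ℝ) ^ (d.sum fun _ e => e)) * monomial d (coeff d P) := by
    rw [EvenAux.negP]
    conv_lhs => rw [P.as_sum]
    rw [map_sum]
    exact Finset.sum_congr rfl fun d _ => EvenAux.negP_monomial d _
  have hrep : P + EvenAux.negP P = ∑ d ∈ P.support,
      ((1 + (-1 : MvPolynomial (Fin D) ℝ) ^ (d.sum fun _ e => e)) * monomial d (coeff d P)) := by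
    nth_rewrite 1 [P.as_sum]
    rw [hneg, ← Finset.sum_add_distrib]
    exact Finset.sum_congr rfl fun d _ => by ring
  rw [hrep]
  refine MvPolynomial.totalDegree_finsetSum_le fun d hd => ?_
  rcases Nat.even_or_odd (d.sum fun _ e => e) with he | ho
  · have h1 : ((-1 : MvPolynomial (Fin D) ℝ) ^ (d.sum fun _ e => e)) = 1 := he.neg_one_pow
    rw [h1]
    have : (1 + 1 : MvPolynomial (Fin D) ℝ) = C 2 := by
      rw [← C_1, ← C_add]; norm_num
    rw [this, C_mul_monomial]
    refine le_trans (totalDegree_monomial_le _ _) ?_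
    have hle : (d.sum fun _ e => e) ≤ 2 * n + 1 := le_trans (le_totalDegree hd) hP
    rcases he with ⟨k, hk⟩
    show (d.sum fun (_ : Fin D) (e : ℕ) => e) ≤ 2 * n
    omega
  · have h1 : ((-1 : MvPolynomial (Fin D) ℝ) ^ (d.sum fun _ e => e)) = -1 := ho.neg_one_pow
    rw [h1]
    simp

end Aux2

section Aux3
variable {D : ℕ}

lemma EvenAux.restrict_neg_invariant (μ : Measure (EuclideanSpace ℝ (Fin D)))
    (hμ : Measure.map (fun x => -x) μ = μ) {A : Set (EuclideanSpace ℝ (Fin D))}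
    (hA : MeasurableSet A) (hAneg : A = -A) :
    (μ.restrict A).map (fun x => -x) = μ.restrict A := by
  have hmeas : Measurable (fun x : EuclideanSpace ℝ (Fin D) => -x) := measurable_neg
  have hpre : (fun x : EuclideanSpace ℝ (Fin D) => -x) ⁻¹' A = A := by
    ext x
    simp only [Set.mem_preimage]
    constructor
    · intro h; rw [hAneg]; simpa using h
    · intro h; rw [hAneg] at h; simpa using h
  conv_rhs => rw [← hμ]
  rw [Measure.restrict_map hmeas hA, hpre]

lemma EvenAux.setIntegral_comp_neg (μ : Measure (EuclideanSpace ℝ (Fin D)))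
    (hμ : Measure.map (fun x => -x) μ = μ) {A : Set (EuclideanSpace ℝ (Fin D))}
    (hA : MeasurableSet A) (hAneg : A = -A) (f : EuclideanSpace ℝ (Fin D) → ℝ) :
    ∫ x in A, f (-x) ∂μ = ∫ x in A, f x ∂μ := by
  have hemb : MeasurableEmbedding (fun x : EuclideanSpace ℝ (Fin D) => -x) :=
    (Homeomorph.neg (EuclideanSpace ℝ (Fin D))).measurableEmbedding
  conv_rhs => rw [show μ.restrict A = (μ.restrict A).map (fun x => -x) from
    (EvenAux.restrict_neg_invariant μ hμ hA hAneg).symm]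
  rw [hemb.integral_map]

lemma EvenAux.volume_map_neg :
    Measure.map (fun x : EuclideanSpace ℝ (Fin D) => -x) volume = volume :=
  Measure.map_neg_eq_self volume

lemma EvenAux.hausdorff_map_neg (d : ℝ) :
    Measure.map (fun x : EuclideanSpace ℝ (Fin D) => -x) (μH[d]) = μH[d] := by
  have h := (LinearIsometryEquiv.neg ℝ
      (E := EuclideanSpace ℝ (Fin D))).toIsometryEquiv.map_hausdorffMeasure d
  convert h using 2
  rfl

end Aux3

section Aux4
variable {D : ℕ}

lemma EvenAux.continuous_evalP (P : MvPolynomial (Fin D) ℝ) :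
    Continuous (fun x : EuclideanSpace ℝ (Fin D) => eval (fun i => x i) P) := by
  induction P using MvPolynomial.induction_on with
  | C a => simpa using continuous_const
  | add p q hp hq => simp only [map_add]; exact hp.add hq
  | mul_X p i hp =>
      simp only [map_mul, eval_X]
      exact hp.mul (by fun_prop)

lemma EvenAux.neg_apply (x : EuclideanSpace ℝ (Fin D)) (i : Fin D) : (-x) i = -(x i) := rfl

lemma EvenAux.frontier_neg_eq (K : Set (EuclideanSpace ℝ (Fin D))) (heven : K = -K) :
    frontier K = -(frontier K) := by
  have h := (Homeomorph.neg (EuclideanSpace ℝ (Fin D))).preimage_frontier K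
  have hcoe : ⇑(Homeomorph.neg (EuclideanSpace ℝ (Fin D))) =
      fun x : EuclideanSpace ℝ (Fin D) => -x := rfl
  rw [hcoe] at h
  have hnegset : ∀ s : Set (EuclideanSpace ℝ (Fin D)),
      (fun x : EuclideanSpace ℝ (Fin D) => -x) ⁻¹' s = -s := fun s => rfl
  rw [hnegset, hnegset] at h
  rw [h, ← heven]

end Aux4


/-- For an even mesh cell (`K = −K`, so that `x ↦ −x` is an isometry of `K`
preserving cell and boundary measures), the supremum of the boundary crowding
`B̄(U)/C̄(U)` over nonzero nonnegative polynomials of total degree at most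
`2n+1` equals the supremum over those of degree at most `2n`:
`M̄⋆(P^{2n+1}) = M̄⋆(P^{2n})`. -/
theorem even_cell_odd_degree_same_weight
    (D n : ℕ) (K : Set (EuclideanSpace ℝ (Fin D))) (hK : IsCompact K)
    (heven : K = -K) :
    sSup {m : ℝ | ∃ P : MvPolynomial (Fin D) ℝ,
        P.totalDegree ≤ 2 * n + 1 ∧
        (∀ x ∈ K, 0 ≤ MvPolynomial.eval (fun i => x i) P) ∧
        0 < (∫ x in K, MvPolynomial.eval (fun i => x i) P) ∧
        m = (⨍ x in frontier K,
              MvPolynomial.eval (fun i => x i) P ∂(μH[(D : ℝ) - 1])) /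
            (⨍ x in K, MvPolynomial.eval (fun i => x i) P)} =
    sSup {m : ℝ | ∃ P : MvPolynomial (Fin D) ℝ,
        P.totalDegree ≤ 2 * n ∧
        (∀ x ∈ K, 0 ≤ MvPolynomial.eval (fun i => x i) P) ∧
        0 < (∫ x in K, MvPolynomial.eval (fun i => x i) P) ∧
        m = (⨍ x in frontier K,
              MvPolynomial.eval (fun i => x i) P ∂(μH[(D : ℝ) - 1])) /
            (⨍ x in K, MvPolynomial.eval (fun i => x i) P)} := by
  apply congrArg sSup
  ext m
  simp only [Set.mem_setOf_eq]
  constructor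
  · rintro ⟨P, hdeg, hnn, hintpos, hm⟩
    have hKmeas : MeasurableSet K := hK.isClosed.measurableSet
    have hFmeas : MeasurableSet (frontier K) := isClosed_frontier.measurableSet
    have hFneg := EvenAux.frontier_neg_eq K heven
    have hFsub : frontier K ⊆ K := hK.isClosed.frontier_subset
    set f : EuclideanSpace ℝ (Fin D) → ℝ := fun x => eval (fun i => x i) P with hf
    have hcont : Continuous f := EvenAux.continuous_evalP P
    have hmemneg : ∀ x ∈ K, -x ∈ K := by
      intro x hx
      rw [heven]
      simpa using hx
    have hevalU : ∀ x : EuclideanSpace ℝ (Fin D),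
        eval (fun i => x i) (P + EvenAux.negP P) = f x + f (-x) := by
      intro x
      rw [map_add, EvenAux.eval_negP]
      rfl
    refine ⟨P + EvenAux.negP P, EvenAux.totalDegree_add_negP P hdeg, ?_, ?_, ?_⟩
    · intro x hx
      rw [hevalU]
      exact add_nonneg (hnn x hx) (hnn (-x) (hmemneg x hx))
    · have hIK : IntegrableOn f K volume := hcont.continuousOn.integrableOn_compact hK
      have hIKn : IntegrableOn (fun x => f (-x)) K volume :=
        (hcont.comp continuous_neg).continuousOn.integrableOn_compact hK
      have hIKeq : ∫ x in K, f (-x) = ∫ x in K, f x :=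
        EvenAux.setIntegral_comp_neg _ EvenAux.volume_map_neg hKmeas heven f
      have h2 : (∫ x in K, eval (fun i => x i) (P + EvenAux.negP P))
          = 2 * ∫ x in K, f x := by
        simp only [hevalU]
        rw [integral_add hIK hIKn, hIKeq]
        ring
      rw [h2]
      linarith [hintpos]
    · -- value of m is preserved
      have hIK : IntegrableOn f K volume := hcont.continuousOn.integrableOn_compact hK
      have hIKn : IntegrableOn (fun x => f (-x)) K volume :=
        (hcont.comp continuous_neg).continuousOn.integrableOn_compact hK
      have hIKeq : ∫ x in K, f (-x) = ∫ x in K, f x :=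
        EvenAux.setIntegral_comp_neg _ EvenAux.volume_map_neg hKmeas heven f
      have h2 : (∫ x in K, eval (fun i => x i) (P + EvenAux.negP P))
          = 2 * ∫ x in K, f x := by
        simp only [hevalU]
        rw [integral_add hIK hIKn, hIKeq]
        ring
      have hFeq : ∫ x in frontier K, f (-x) ∂(μH[(D : ℝ) - 1])
          = ∫ x in frontier K, f x ∂(μH[(D : ℝ) - 1]) :=
        EvenAux.setIntegral_comp_neg _ (EvenAux.hausdorff_map_neg _) hFmeas hFneg f
      have hemb : MeasurableEmbedding (fun x : EuclideanSpace ℝ (Fin D) => -x) :=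
        (Homeomorph.neg (EuclideanSpace ℝ (Fin D))).measurableEmbedding
      have h2F : (∫ x in frontier K, eval (fun i => x i) (P + EvenAux.negP P)
            ∂(μH[(D : ℝ) - 1]))
          = 2 * ∫ x in frontier K, f x ∂(μH[(D : ℝ) - 1]) := by
        by_cases hIF : IntegrableOn f (frontier K) (μH[(D : ℝ) - 1])
        · have hmapinv := EvenAux.restrict_neg_invariant (μH[(D : ℝ) - 1])
            (EvenAux.hausdorff_map_neg _) hFmeas hFneg
          have hIFn : IntegrableOn (fun x => f (-x)) (frontier K) (μH[(D : ℝ) - 1]) := by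
            have := hIF
            rw [IntegrableOn, ← hmapinv, hemb.integrable_map_iff] at this
            exact this
          simp only [hevalU]
          rw [integral_add hIF hIFn, hFeq]
          ring
        · have h0 : (∫ x in frontier K, f x ∂(μH[(D : ℝ) - 1])) = 0 := integral_undef hIF
          have hU0 : ¬ IntegrableOn
              (fun x => eval (fun i => x i) (P + EvenAux.negP P)) (frontier K)
              (μH[(D : ℝ) - 1]) := by
            intro hU
            apply hIF
            refine Integrable.mono hU hcont.aestronglyMeasurable.restrict ?_
            refine (ae_restrict_iff' hFmeas).2 (Filter.Eventually.of_forall fun x hx => ?_)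
            have hx' : x ∈ K := hFsub hx
            have h1 : 0 ≤ f x := hnn x hx'
            have h2' : 0 ≤ f (-x) := hnn (-x) (hmemneg x hx')
            rw [hevalU, Real.norm_eq_abs, Real.norm_eq_abs, abs_of_nonneg h1,
              abs_of_nonneg (add_nonneg h1 h2')]
            linarith
          rw [integral_undef hU0, h0]
          ring
      rw [hm, setAverage_eq, setAverage_eq, setAverage_eq, setAverage_eq, h2, h2F]
      rw [smul_eq_mul, smul_eq_mul, smul_eq_mul, smul_eq_mul]
      rw [show ((μH[(D : ℝ) - 1]).real (frontier K))⁻¹ * (2 * ∫ x in frontier K, f x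
            ∂(μH[(D : ℝ) - 1]))
          = 2 * (((μH[(D : ℝ) - 1]).real (frontier K))⁻¹ * ∫ x in frontier K, f x
            ∂(μH[(D : ℝ) - 1])) by ring,
        show (volume.real K)⁻¹ * (2 * ∫ x in K, f x)
          = 2 * ((volume.real K)⁻¹ * ∫ x in K, f x) by ring]
      rw [mul_div_mul_left _ _ (two_ne_zero)]
  · rintro ⟨P, hdeg, hnn, hintpos, hm⟩
    exact ⟨P, hdeg.trans (by omega), hnn, hintpos, hm⟩
end
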